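/- For every x ∈ [0,L] and every t ≥ 0, |c_e(x,t) − (c_I + β(L/2 − x))| ≤ (|β| L / 2) · exp(−(π/L)² D t); in particular, for each x ∈ [0,L], c_e(x,t) converges to the steady linear profile c_I + β(L/2 − x) as t → ∞. -/

import Mathlib

open Real Filter

set_option maxHeartbeats 800000

lemma odd_summable : Summable (fun k : ℕ => (1 : ℝ) / (2 * (k : ℝ) + 1) ^ 2) := by
  have h0 := hasSum_zeta_two.summable
  have h : Summable (fun k : ℕ => (1 : ℝ) / ((k : ℝ) + 1) ^ 2) := by
    have h1 := (summable_nat_add_iff (f := fun n : ℕ => (1 : ℝ) / (n : ℝ) ^ 2) 1).mpr h0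
    convert h1 using 2 with k
    · rfl
    push_cast
    ring
  apply h.of_nonneg_of_le (fun k => by positivity)
  intro k
  apply one_div_le_one_div_of_le (by positivity)
  have hk : (0 : ℝ) ≤ (k : ℝ) := Nat.cast_nonneg k
  nlinarith

lemma odd_hasSum : HasSum (fun k : ℕ => (1 : ℝ) / (2 * (k : ℝ) + 1) ^ 2) (π ^ 2 / 8) := by
  have htot : HasSum (fun n : ℕ => (1 : ℝ) / (n : ℝ) ^ 2) (π ^ 2 / 6) := hasSum_zeta_two
  set S : ℝ := ∑' k : ℕ, (1 : ℝ) / (2 * (k : ℝ) + 1) ^ 2 with hS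
  have hodd : HasSum (fun k : ℕ => (1 : ℝ) / (2 * (k : ℝ) + 1) ^ 2) S := odd_summable.hasSum
  have heven : HasSum (fun k : ℕ => (1 : ℝ) / ((2 * k : ℕ) : ℝ) ^ 2) (π ^ 2 / 24) := by
    have h := htot.mul_left (1 / 4)
    have e : (fun n : ℕ => (1 / 4 : ℝ) * (1 / (n : ℝ) ^ 2)) =
        fun k : ℕ => (1 : ℝ) / ((2 * k : ℕ) : ℝ) ^ 2 := by
      funext n
      push_cast
      rcases eq_or_ne (n : ℝ) 0 with h | h
      · simp [h]
      · field_simp; ring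
    rw [e] at h
    convert h using 1
    · rfl
    ring
  have hodd' : HasSum (fun k : ℕ => (1 : ℝ) / ((2 * k + 1 : ℕ) : ℝ) ^ 2) S := by
    convert hodd using 2 with k
    push_cast
    ring
  have hcomb := HasSum.even_add_odd (f := fun n : ℕ => (1 : ℝ) / (n : ℝ) ^ 2) heven hodd'
  have := hcomb.unique htot
  have hSval : S = π ^ 2 / 8 := by linarith
  rw [← hSval]
  exact hodd

theorem stmt_6 (L D β cI : ℝ) (hL : 0 < L) (hD : 0 < D)
    (ce : ℝ × ℝ → ℝ)
    (hce : ∀ x t : ℝ, ce (x, t) =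
      cI + β * (L / 2 - x) -
        4 * β * L *
          ∑' k : ℕ, (1 / ((2 * (k : ℝ) + 1) ^ 2 * Real.pi ^ 2)) *
            Real.cos ((2 * (k : ℝ) + 1) * Real.pi * x / L) *
            Real.exp (-(((2 * (k : ℝ) + 1) * Real.pi / L) ^ 2 * D * t))) :
    (∀ x : ℝ, 0 ≤ x → x ≤ L → ∀ t : ℝ, 0 ≤ t →
      |ce (x, t) - (cI + β * (L / 2 - x))| ≤
        |β| * L / 2 * Real.exp (-(Real.pi / L) ^ 2 * D * t)) ∧
    (∀ x : ℝ, 0 ≤ x → x ≤ L →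
      Tendsto (fun t : ℝ => ce (x, t)) atTop (nhds (cI + β * (L / 2 - x)))) := by
  have key : ∀ x : ℝ, ∀ t : ℝ, 0 ≤ t →
      |ce (x, t) - (cI + β * (L / 2 - x))| ≤
        |β| * L / 2 * Real.exp (-(Real.pi / L) ^ 2 * D * t) := by
    intro x t ht
    rw [hce x t]
    set E := Real.exp (-(Real.pi / L) ^ 2 * D * t) with hE
    set f : ℕ → ℝ := fun k => (1 / ((2 * (k : ℝ) + 1) ^ 2 * Real.pi ^ 2)) *
        Real.cos ((2 * (k : ℝ) + 1) * Real.pi * x / L) *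
        Real.exp (-(((2 * (k : ℝ) + 1) * Real.pi / L) ^ 2 * D * t)) with hf
    have hbound : ∀ k, |f k| ≤ 1 / ((2 * (k : ℝ) + 1) ^ 2 * Real.pi ^ 2) * E := by
      intro k
      have hk : (0 : ℝ) ≤ (k : ℝ) := Nat.cast_nonneg k
      have hexp : Real.exp (-(((2 * (k : ℝ) + 1) * Real.pi / L) ^ 2 * D * t)) ≤ E := by
        rw [hE]
        apply Real.exp_le_exp.mpr
        have h1 : (Real.pi / L) ^ 2 ≤ ((2 * (k : ℝ) + 1) * Real.pi / L) ^ 2 := by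
          rw [div_pow, div_pow, mul_pow]
          apply div_le_div_of_nonneg_right _ (by positivity)
          nlinarith [sq_nonneg Real.pi, mul_nonneg hk (sq_nonneg Real.pi),
            mul_nonneg (mul_nonneg hk hk) (sq_nonneg Real.pi)]
        nlinarith [mul_nonneg hD.le ht,
          mul_le_mul_of_nonneg_right h1 (mul_nonneg hD.le ht)]
      have hcos : |Real.cos ((2 * (k : ℝ) + 1) * Real.pi * x / L)| ≤ 1 :=
        Real.abs_cos_le_one _
      have hpos : (0 : ℝ) < 1 / ((2 * (k : ℝ) + 1) ^ 2 * Real.pi ^ 2) := by positivity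
      rw [hf]
      simp only [abs_mul, abs_of_pos hpos, abs_of_pos (Real.exp_pos _)]
      calc 1 / ((2 * (k : ℝ) + 1) ^ 2 * Real.pi ^ 2) *
            |Real.cos ((2 * (k : ℝ) + 1) * Real.pi * x / L)| *
            Real.exp (-(((2 * (k : ℝ) + 1) * Real.pi / L) ^ 2 * D * t))
          ≤ 1 / ((2 * (k : ℝ) + 1) ^ 2 * Real.pi ^ 2) * 1 *
            Real.exp (-(((2 * (k : ℝ) + 1) * Real.pi / L) ^ 2 * D * t)) := by
            apply mul_le_mul_of_nonneg_right _ (Real.exp_pos _).le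
            exact mul_le_mul_of_nonneg_left hcos hpos.le
        _ ≤ 1 / ((2 * (k : ℝ) + 1) ^ 2 * Real.pi ^ 2) * E := by
            rw [mul_one]
            exact mul_le_mul_of_nonneg_left hexp hpos.le
    have hgsum : HasSum (fun k : ℕ => 1 / ((2 * (k : ℝ) + 1) ^ 2 * Real.pi ^ 2) * E)
        (E / 8) := by
      have h := odd_hasSum.mul_right (E / Real.pi ^ 2)
      have hpi : Real.pi ≠ 0 := Real.pi_ne_zero
      have e : (fun k : ℕ => (1 : ℝ) / (2 * (k : ℝ) + 1) ^ 2 * (E / Real.pi ^ 2)) =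
          fun k : ℕ => 1 / ((2 * (k : ℝ) + 1) ^ 2 * Real.pi ^ 2) * E := by
        funext k
        have hk : ((2 : ℝ) * k + 1) ≠ 0 := by positivity
        field_simp
      have ev : π ^ 2 / 8 * (E / Real.pi ^ 2) = E / 8 := by
        field_simp
      rw [e, ev] at h
      exact h
    have hgsummable := hgsum.summable
    have hfabs : Summable (fun k => |f k|) :=
      Summable.of_nonneg_of_le (fun k => abs_nonneg _) hbound hgsummable
    have hfsum : Summable f := hfabs.of_abs
    have h1 : |∑' k, f k| ≤ ∑' k, |f k| := by
      have := norm_tsum_le_tsum_norm (f := f) (by simpa [Real.norm_eq_abs] using hfabs)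
      simpa [Real.norm_eq_abs] using this
    have h2 : ∑' k, |f k| ≤ ∑' k : ℕ, 1 / ((2 * (k : ℝ) + 1) ^ 2 * Real.pi ^ 2) * E :=
      Summable.tsum_le_tsum hbound hfabs hgsummable
    have hval : |∑' k, f k| ≤ E / 8 := by
      rw [← hgsum.tsum_eq]
      exact h1.trans h2
    have heq : cI + β * (L / 2 - x) - 4 * β * L * (∑' k, f k) - (cI + β * (L / 2 - x)) =
        -(4 * β * L * (∑' k, f k)) := by ring
    rw [heq, abs_neg, abs_mul, abs_mul, abs_mul]
    have hfinal : |(4 : ℝ)| * |β| * |L| * |∑' k, f k| ≤ 4 * |β| * L * (E / 8) := by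
      rw [abs_of_pos hL, show |(4 : ℝ)| = 4 by norm_num]
      exact mul_le_mul_of_nonneg_left hval (by positivity)
    calc |(4 : ℝ)| * |β| * |L| * |∑' k, f k| ≤ 4 * |β| * L * (E / 8) := hfinal
      _ = |β| * L / 2 * E := by ring
  refine ⟨fun x _ _ t ht => key x t ht, fun x hx hx' => ?_⟩
  have h0 : Tendsto (fun t : ℝ => ce (x, t) - (cI + β * (L / 2 - x))) atTop (nhds 0) := by
    apply squeeze_zero_norm' (a := fun t => |β| * L / 2 * Real.exp (-(Real.pi / L) ^ 2 * D * t))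
    · filter_upwards [eventually_ge_atTop (0 : ℝ)] with t ht
      simpa using key x t ht
    · have hneg : -(Real.pi / L) ^ 2 * D < 0 := by
        have : 0 < (Real.pi / L) ^ 2 * D := by positivity
        nlinarith
      have h1 : Tendsto (fun t : ℝ => -(Real.pi / L) ^ 2 * D * t) atTop atBot :=
        (tendsto_const_mul_atBot_of_neg hneg).mpr tendsto_id
      have h2 := (Real.tendsto_exp_atBot.comp h1).const_mul (|β| * L / 2)
      simpa using h2
  have := h0.add_const (cI + β * (L / 2 - x))
  simpa using this
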